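/- Let K be a compact metrizable group with Haar probability measure m, and let B ⊂ K be a finite subset with spectral gap κ ∈ (0,1], meaning that ‖(1/(2|B|))·Σ_{b∈B}(f∘ℓ_b + f∘ℓ_{b⁻¹})‖ ≤ (1−κ)‖f‖ for all f ∈ L²(K,m) with ∫ f dm = 0, where ℓ_b(x) = bx. Fix n ≥ 1 and define the operator P₁ on L²(Kⁿ, m^⊗n) by (P₁f)(x₁,…,xₙ) = (1/(2|B|))·Σ_{b∈B}[f(bx₁,…,bxₙ) + f(b⁻¹x₁,…,b⁻¹xₙ)]. Then: (i) P₁f = f for every f ∈ L²(Kⁿ,m^⊗n) satisfying f(kx₁,…,kxₙ) = f(x₁,…,xₙ) a.e. for every k ∈ K; and (ii) ‖P₁f‖ ≤ (1−κ)‖f‖ for every f ∈ L²(Kⁿ,m^⊗n) such that ∫_K f(kx₁,…,kxₙ) dm(k) = 0 for m^⊗n-almost every (x₁,…,xₙ). -/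

import Mathlib

open MeasureTheory
open scoped ENNReal BigOperators

lemma eLpNorm_two_sq {α : Type*} [MeasurableSpace α] (μ : Measure α) (h : α → ℝ) :
    eLpNorm h 2 μ ^ (2:ℝ) = ∫⁻ a, (‖h a‖₊ : ℝ≥0∞) ^ (2:ℝ) ∂μ := by
  rw [eLpNorm_eq_lintegral_rpow_enorm_toReal (by norm_num) (by norm_num), ← ENNReal.rpow_mul]
  norm_num
  rfl

lemma aemeasurable_lintegral_right {α β : Type*} [MeasurableSpace α] [MeasurableSpace β]
    {μ : Measure α} {ν : Measure β} [SFinite ν] {f : α × β → ℝ≥0∞}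
    (hf : AEMeasurable f (μ.prod ν)) :
    AEMeasurable (fun x => ∫⁻ y, f (x, y) ∂ν) μ :=
  ⟨fun x => ∫⁻ y, hf.mk f (x, y) ∂ν, hf.measurable_mk.lintegral_prod_right', by
    filter_upwards [Measure.ae_ae_of_ae_prod hf.ae_eq_mk] with x hx using lintegral_congr_ae hx⟩

lemma eLpNorm_two_sq_prod {α β : Type*} [MeasurableSpace α] [MeasurableSpace β]
    (μ : Measure α) (ν : Measure β) [SFinite ν] {h : α × β → ℝ}
    (hh : AEStronglyMeasurable h (μ.prod ν)) :
    eLpNorm h 2 (μ.prod ν) ^ (2:ℝ)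
      = ∫⁻ x, eLpNorm (fun y => h (x, y)) 2 ν ^ (2:ℝ) ∂μ := by
  rw [eLpNorm_two_sq, lintegral_prod (fun z => (‖h z‖₊ : ℝ≥0∞) ^ (2:ℝ)) (hh.enorm.pow aemeasurable_const)]
  simp only [eLpNorm_two_sq]


/-- The averaging (Markov) operator, at the level of functions, of the diagonal left
translation action of a finite symmetrized set `B` on `Kⁿ`:
`(P₁f)(x₁,…,xₙ) = (1/(2|B|))·Σ_{b∈B}[f(bx₁,…,bxₙ) + f(b⁻¹x₁,…,b⁻¹xₙ)]`. -/
noncomputable def diagMarkov {K : Type*} [Group K] {n : ℕ} (B : Finset K)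
    (f : (Fin n → K) → ℝ) (x : Fin n → K) : ℝ :=
  (1 / (2 * (B.card : ℝ))) * ∑ b ∈ B, (f (fun i => b * x i) + f (fun i => b⁻¹ * x i))

/-- Let `K` be a compact metrizable group with Haar probability measure `m` and `B ⊂ K`
a finite subset with spectral gap `κ ∈ (0,1]` on `L²₀(K,m)`. Then on `L²(Kⁿ,m^⊗n)` the
diagonal Markov operator `P₁` of `B`: (i) fixes every function invariant under the diagonal
left translation action of `K`; and (ii) contracts by `(1−κ)` every function whose average
over the diagonal `K`-orbits vanishes a.e. -/
theorem diag_markov_spectral_gap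
    {K : Type*} [Group K] [TopologicalSpace K] [IsTopologicalGroup K] [CompactSpace K]
    [TopologicalSpace.MetrizableSpace K] [MeasurableSpace K] [BorelSpace K]
    (m : Measure K) [m.IsHaarMeasure] [IsProbabilityMeasure m]
    (B : Finset K) (hB : B.Nonempty)
    (κ : ℝ) (hκ0 : 0 < κ) (hκ1 : κ ≤ 1)
    (hgap : ∀ f : K → ℝ, MemLp f 2 m → (∫ x, f x ∂m) = 0 →
      eLpNorm (fun x => (1 / (2 * (B.card : ℝ))) *
          ∑ b ∈ B, (f (b * x) + f (b⁻¹ * x))) 2 m ≤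
        ENNReal.ofReal (1 - κ) * eLpNorm f 2 m)
    (n : ℕ) (hn : 1 ≤ n) :
    (∀ f : (Fin n → K) → ℝ, MemLp f 2 (Measure.pi fun _ : Fin n => m) →
      (∀ k : K, (fun x : Fin n → K => f fun i => k * x i)
          =ᵐ[Measure.pi fun _ : Fin n => m] f) →
      diagMarkov B f =ᵐ[Measure.pi fun _ : Fin n => m] f) ∧
    (∀ f : (Fin n → K) → ℝ, MemLp f 2 (Measure.pi fun _ : Fin n => m) →
      (∀ᵐ x ∂(Measure.pi fun _ : Fin n => m), (∫ k, f (fun i => k * x i) ∂m) = 0) →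
      eLpNorm (diagMarkov B f) 2 (Measure.pi fun _ : Fin n => m) ≤
        ENNReal.ofReal (1 - κ) * eLpNorm f 2 (Measure.pi fun _ : Fin n => m)) := by
  obtain ⟨N, rfl⟩ : ∃ N, n = N + 1 := ⟨n - 1, (Nat.succ_pred_eq_of_pos hn).symm⟩
  constructor
  ·
    intro f _hf hinv
    have hc : (0:ℝ) < (B.card : ℝ) := by exact_mod_cast Finset.card_pos.mpr hB
    have h1 : ∀ᵐ x ∂(Measure.pi fun _ : Fin (N+1) => m), ∀ b : B, f (fun i => (b:K) * x i) = f x :=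
      ae_all_iff.2 fun b => hinv (b : K)
    have h2 : ∀ᵐ x ∂(Measure.pi fun _ : Fin (N+1) => m), ∀ b : B, f (fun i => (b:K)⁻¹ * x i) = f x :=
      ae_all_iff.2 fun b => hinv ((b : K)⁻¹)
    filter_upwards [h1, h2] with x hx1 hx2
    unfold diagMarkov
    have hs : ∑ b ∈ B, (f (fun i => b * x i) + f (fun i => b⁻¹ * x i))
        = ∑ _b ∈ B, (f x + f x) :=
      Finset.sum_congr rfl fun b hb => by rw [hx1 ⟨b, hb⟩, hx2 ⟨b, hb⟩]
    rw [hs, Finset.sum_const, nsmul_eq_mul]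
    field_simp
    ring
  ·
    haveI : SecondCountableTopology K := by
      letI := TopologicalSpace.metrizableSpaceMetric K
      infer_instance
    haveI : LocallyCompactSpace K := by
      letI := TopologicalSpace.metrizableSpaceMetric K
      infer_instance
    haveI hRI : m.IsMulRightInvariant := by
      constructor
      intro a
      haveI : IsProbabilityMeasure (Measure.map (· * a) m) :=
        Measure.isProbabilityMeasure_map (measurable_mul_const a).aemeasurable
      exact Measure.isHaarMeasure_eq_of_isProbabilityMeasure _ _
    let e1 : (Fin (N+1) → K) ≃ᵐ K × (Fin N → K) :=
      MeasurableEquiv.piFinSuccAbove (fun _ : Fin (N+1) => K) 0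
    let e2 : (K × (Fin N → K)) ≃ᵐ (K × (Fin N → K)) :=
      { toFun := fun p => (p.1, fun i => p.1⁻¹ * p.2 i)
        invFun := fun p => (p.1, fun i => p.1 * p.2 i)
        left_inv := fun p => by simp
        right_inv := fun p => by simp
        measurable_toFun := by
          exact measurable_fst.prodMk <| measurable_pi_lambda _ fun i =>
            measurable_fst.inv.mul ((measurable_pi_apply i).comp measurable_snd)
        measurable_invFun := by
          exact measurable_fst.prodMk <| measurable_pi_lambda _ fun i =>
            measurable_fst.mul ((measurable_pi_apply i).comp measurable_snd) }
    let Φ : (Fin (N+1) → K) ≃ᵐ ((Fin N → K) × K) :=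
      (e1.trans e2).trans MeasurableEquiv.prodComm
    have hΦ : MeasurePreserving Φ (Measure.pi fun _ : Fin (N+1) => m)
        ((Measure.pi fun _ : Fin N => m).prod m) := by
      have h1 : MeasurePreserving e1 (Measure.pi fun _ : Fin (N+1) => m)
          (m.prod (Measure.pi fun _ : Fin N => m)) :=
        measurePreserving_piFinSuccAbove (fun _ => m) 0
      have h2 : MeasurePreserving e2 (m.prod (Measure.pi fun _ : Fin N => m))
          (m.prod (Measure.pi fun _ : Fin N => m)) := by
        have := MeasurePreserving.skew_product (f := fun a : K => a)
          (g := fun (a : K) (y : Fin N → K) => fun i => a⁻¹ * y i)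
          (MeasurePreserving.id m)
          (by
            exact measurable_pi_lambda _ fun i =>
              measurable_fst.inv.mul ((measurable_pi_apply i).comp measurable_snd))
          (ae_of_all _ fun a => by
            exact map_mul_left_eq_self (Measure.pi fun _ : Fin N => m) (fun _ => a⁻¹))
        exact this
      have h3 : MeasurePreserving Prod.swap (m.prod (Measure.pi fun _ : Fin N => m))
          ((Measure.pi fun _ : Fin N => m).prod m) := Measure.measurePreserving_swap
      exact h3.comp (h2.comp h1)
    have keyA : ∀ (k : K) (x : Fin (N+1) → K),
        Φ (fun i => k * x i) = ((Φ x).1, k * (Φ x).2) := by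
      intro k x
      refine Prod.ext ?_ ?_
      · funext i
        simp [Φ, e1, e2, MeasurableEquiv.piFinSuccAbove, MeasurableEquiv.prodComm, Fin.tail,
          mul_assoc, mul_inv_rev]
      · simp [Φ, e1, e2, MeasurableEquiv.piFinSuccAbove, MeasurableEquiv.prodComm, Fin.tail]
    intro f hf h0
    set g : (Fin N → K) × K → ℝ := fun p => f (Φ.symm p) with hgdef
    have hgf : ∀ x, g (Φ x) = f x := fun x => by rw [hgdef]; simp
    have hΦs : MeasurePreserving Φ.symm ((Measure.pi fun _ : Fin N => m).prod m)
        (Measure.pi fun _ : Fin (N+1) => m) := hΦ.symm Φ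
    have hg : MemLp g 2 ((Measure.pi fun _ : Fin N => m).prod m) :=
      hf.comp_measurePreserving hΦs
    have hgm := hg.aestronglyMeasurable
    set Pg : (Fin N → K) × K → ℝ := fun p =>
      (1 / (2 * (B.card : ℝ))) * ∑ b ∈ B, (g (p.1, b * p.2) + g (p.1, b⁻¹ * p.2)) with hPgdef
    have hPgΦ : ∀ x, Pg (Φ x) = diagMarkov B f x := by
      intro x
      simp only [hPgdef]
      unfold diagMarkov
      have hs : ∀ b ∈ B, g ((Φ x).1, b * (Φ x).2) + g ((Φ x).1, b⁻¹ * (Φ x).2)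
          = f (fun i => b * x i) + f (fun i => b⁻¹ * x i) := by
        intro b _
        rw [← hgf (fun i => b * x i), keyA b x, ← hgf (fun i => b⁻¹ * x i), keyA b⁻¹ x]
      rw [Finset.sum_congr rfl hs]
    -- measurability of Pg
    have hT : ∀ c : K, MeasurePreserving (fun p : (Fin N → K) × K => (p.1, c * p.2))
        ((Measure.pi fun _ : Fin N => m).prod m) ((Measure.pi fun _ : Fin N => m).prod m) := by
      intro c
      exact (MeasurePreserving.id _).prod (measurePreserving_mul_left m c)
    have hPgm : AEStronglyMeasurable Pg ((Measure.pi fun _ : Fin N => m).prod m) := by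
      rw [hPgdef]
      have hsum : AEStronglyMeasurable
          (fun p : (Fin N → K) × K => ∑ b ∈ B, (g (p.1, b * p.2) + g (p.1, b⁻¹ * p.2)))
          ((Measure.pi fun _ : Fin N => m).prod m) := by
        refine Finset.aestronglyMeasurable_fun_sum
          (f := fun b (p : (Fin N → K) × K) => g (p.1, b * p.2) + g (p.1, b⁻¹ * p.2)) B
          fun b _ => ?_
        exact (hgm.comp_measurePreserving (hT b)).add (hgm.comp_measurePreserving (hT b⁻¹))
      exact hsum.const_mul _
    -- norm transfers
    have hnf : eLpNorm f 2 (Measure.pi fun _ : Fin (N+1) => m)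
        = eLpNorm g 2 ((Measure.pi fun _ : Fin N => m).prod m) := by
      calc eLpNorm f 2 (Measure.pi fun _ : Fin (N+1) => m)
          = eLpNorm (g ∘ Φ) 2 (Measure.pi fun _ : Fin (N+1) => m) := by
            congr 1; exact funext fun x => (hgf x).symm
        _ = eLpNorm g 2 ((Measure.pi fun _ : Fin N => m).prod m) :=
            eLpNorm_comp_measurePreserving hgm hΦ
    have hnP : eLpNorm (diagMarkov B f) 2 (Measure.pi fun _ : Fin (N+1) => m)
        = eLpNorm Pg 2 ((Measure.pi fun _ : Fin N => m).prod m) := by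
      calc eLpNorm (diagMarkov B f) 2 (Measure.pi fun _ : Fin (N+1) => m)
          = eLpNorm (Pg ∘ Φ) 2 (Measure.pi fun _ : Fin (N+1) => m) := by
            congr 1; exact funext fun x => (hPgΦ x).symm
        _ = eLpNorm Pg 2 ((Measure.pi fun _ : Fin N => m).prod m) :=
            eLpNorm_comp_measurePreserving hPgm hΦ
    -- orbit average condition after the change of variables
    have h0' : ∀ᵐ p ∂((Measure.pi fun _ : Fin N => m).prod m), (∫ k, g (p.1, k) ∂m) = 0 := by
      have h1 := hΦs.quasiMeasurePreserving.ae h0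
      filter_upwards [h1] with p hp
      have hpt : ∀ k, f (fun i => k * Φ.symm p i) = g (p.1, k * p.2) := by
        intro k
        rw [← hgf (fun i => k * Φ.symm p i), keyA k (Φ.symm p)]
        simp
      simp_rw [hpt] at hp
      have h2 := (measurePreserving_mul_right m p.2).integral_comp'
        (f := MeasurableEquiv.mulRight p.2) (fun k => g (p.1, k))
      rw [← h2]
      exact hp
    have h0y : ∀ᵐ y ∂(Measure.pi fun _ : Fin N => m), (∫ k, g (y, k) ∂m) = 0 := by
      have h2 := Measure.ae_ae_of_ae_prod h0'
      haveI : (ae m).NeBot := ae_neBot.2 (IsProbabilityMeasure.ne_zero m)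
      filter_upwards [h2] with y hy
      exact hy.exists.choose_spec
    
    -- fiberwise estimates
    have hF : AEMeasurable (fun p : (Fin N → K) × K => (‖g p‖₊ : ℝ≥0∞) ^ (2:ℝ))
        ((Measure.pi fun _ : Fin N => m).prod m) := hgm.enorm.pow aemeasurable_const
    have hsq := eLpNorm_two_sq_prod (Measure.pi fun _ : Fin N => m) m hgm
    have hfin : (∫⁻ y, eLpNorm (fun a => g (y, a)) 2 m ^ (2:ℝ)
        ∂(Measure.pi fun _ : Fin N => m)) ≠ ⊤ := by
      rw [← hsq]
      exact (ENNReal.rpow_lt_top_of_nonneg (by norm_num) hg.2.ne).ne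
    have hmeasY : AEMeasurable (fun y => ∫⁻ a, (‖g (y, a)‖₊ : ℝ≥0∞) ^ (2:ℝ) ∂m)
        (Measure.pi fun _ : Fin N => m) := aemeasurable_lintegral_right hF
    have haefin : ∀ᵐ y ∂(Measure.pi fun _ : Fin N => m),
        (∫⁻ a, (‖g (y, a)‖₊ : ℝ≥0∞) ^ (2:ℝ) ∂m) < ⊤ := by
      refine ae_lt_top' hmeasY ?_
      have heq : (∫⁻ y, ∫⁻ a, (‖g (y, a)‖₊ : ℝ≥0∞) ^ (2:ℝ) ∂m ∂(Measure.pi fun _ : Fin N => m))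
          = ∫⁻ y, eLpNorm (fun a => g (y, a)) 2 m ^ (2:ℝ) ∂(Measure.pi fun _ : Fin N => m) := by
        simp only [← eLpNorm_two_sq]
      rw [heq]
      exact hfin
    have hmem : ∀ᵐ y ∂(Measure.pi fun _ : Fin N => m), MemLp (fun a => g (y, a)) 2 m := by
      filter_upwards [haefin, hgm.prodMk_left] with y h1 h2
      refine ⟨h2, ?_⟩
      rw [← ENNReal.rpow_lt_top_iff_of_pos (show (0:ℝ) < 2 by norm_num), eLpNorm_two_sq]
      exact h1
    have hb : ∀ᵐ y ∂(Measure.pi fun _ : Fin N => m),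
        eLpNorm (fun a => Pg (y, a)) 2 m ≤
          ENNReal.ofReal (1 - κ) * eLpNorm (fun a => g (y, a)) 2 m := by
      filter_upwards [hmem, h0y] with y h1 h2
      exact hgap (fun a => g (y, a)) h1 h2
    have hCne : (ENNReal.ofReal (1 - κ)) ^ (2:ℝ) ≠ ⊤ :=
      (ENNReal.rpow_lt_top_of_nonneg (by norm_num) ENNReal.ofReal_ne_top).ne
    have hsqP := eLpNorm_two_sq_prod (Measure.pi fun _ : Fin N => m) m hPgm
    have step : eLpNorm Pg 2 ((Measure.pi fun _ : Fin N => m).prod m) ^ (2:ℝ)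
        ≤ (ENNReal.ofReal (1 - κ) * eLpNorm g 2 ((Measure.pi fun _ : Fin N => m).prod m)) ^ (2:ℝ) := by
      rw [hsqP, ENNReal.mul_rpow_of_nonneg _ _ (by norm_num : (0:ℝ) ≤ 2), hsq]
      calc ∫⁻ y, eLpNorm (fun a => Pg (y, a)) 2 m ^ (2:ℝ) ∂(Measure.pi fun _ : Fin N => m)
          ≤ ∫⁻ y, (ENNReal.ofReal (1 - κ)) ^ (2:ℝ) * eLpNorm (fun a => g (y, a)) 2 m ^ (2:ℝ)
              ∂(Measure.pi fun _ : Fin N => m) := by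
            refine lintegral_mono_ae ?_
            filter_upwards [hb] with y hy
            calc eLpNorm (fun a => Pg (y, a)) 2 m ^ (2:ℝ)
                ≤ (ENNReal.ofReal (1 - κ) * eLpNorm (fun a => g (y, a)) 2 m) ^ (2:ℝ) :=
                  ENNReal.rpow_le_rpow hy (by norm_num)
              _ = (ENNReal.ofReal (1 - κ)) ^ (2:ℝ) * eLpNorm (fun a => g (y, a)) 2 m ^ (2:ℝ) :=
                  ENNReal.mul_rpow_of_nonneg _ _ (by norm_num)
        _ = (ENNReal.ofReal (1 - κ)) ^ (2:ℝ) * ∫⁻ y, eLpNorm (fun a => g (y, a)) 2 m ^ (2:ℝ)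
              ∂(Measure.pi fun _ : Fin N => m) := lintegral_const_mul' _ _ hCne
    have final : eLpNorm Pg 2 ((Measure.pi fun _ : Fin N => m).prod m)
        ≤ ENNReal.ofReal (1 - κ) * eLpNorm g 2 ((Measure.pi fun _ : Fin N => m).prod m) := by
      have h := ENNReal.rpow_le_rpow step (by norm_num : (0:ℝ) ≤ (2:ℝ)⁻¹)
      rw [← ENNReal.rpow_mul, ← ENNReal.rpow_mul] at h
      norm_num at h
      simpa using h
    rw [hnP, hnf]
    exact final
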